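/- Strict positivity in type A (Case: both conditions hold): let g be of type A_n with adapted ι, 1 < k < n with ι^{(k)} > ι^{(k±1)}, and let T = [j₁,...,j_k]^A_{−P(k−1)} + ⟨λ,h_k⟩ with 1 ≤ j₁ < ⋯ < j_k ≤ n+1, j_k > k, and T ≠ λ^{(k)} (i.e., (j₁,...,j_k) ≠ (1,...,k−1,k+1)). Then every coordinate x_{m,j} with m = 1 and first occurrence (i.e., whose position l in ι satisfies l⁽⁻⁾ = 0) has nonnegative coefficient in T. -/

import Mathlib

/-! Combinatorics of an adapted sequence `ι` for a classical Lie algebra, and the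
column-tableau linear forms of Kanakubo–Nakashima in re-indexed coordinates `x_{m,j}`
(the coordinate for the `m`-th occurrence of the index `j` in `ι`). -/

noncomputable section

/-- First position `m ≥ 1` with `ι m ∈ {i, j}`. -/
def firstBoth (ι : ℕ → ℕ) (i j : ℕ) : ℕ := sInf {m | 1 ≤ m ∧ (ι m = i ∨ ι m = j)}

/-- `p_{i,j} = 1` if `i` occurs before `j` in `ι`, and `0` otherwise. -/
def pOf (ι : ℕ → ℕ) (i j : ℕ) : ℕ := if ι (firstBoth ι i j) = i then 1 else 0

/-- `ι⁽ⁱ⁾`, the first position of `ι` at which `i` occurs. -/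
def firstOcc (ι : ℕ → ℕ) (i : ℕ) : ℕ := sInf {m | 1 ≤ m ∧ ι m = i}

/-- `P(k) = p_{2,1} + p_{3,2} + ⋯ + p_{k,k-1}` (so `P 0 = P 1 = 0`). -/
def Pof (ι : ℕ → ℕ) (k : ℕ) : ℕ := ∑ i ∈ Finset.Icc 2 k, pOf ι i (i - 1)

/-- The condition that every index `1,…,n` occurs infinitely often in `ι` and
consecutive entries of `ι` differ. -/
def SeqCond (n : ℕ) (ι : ℕ → ℕ) : Prop :=
  (∀ m, 1 ≤ m → 1 ≤ ι m ∧ ι m ≤ n) ∧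
  (∀ m, 1 ≤ m → ι m ≠ ι (m + 1)) ∧
  (∀ i, 1 ≤ i → i ≤ n → ∀ N : ℕ, ∃ m, N < m ∧ ι m = i)

/-- `ι` is adapted to the type `A_n` Cartan matrix: for adjacent indices `i, j`, any two
consecutive members of the subsequence of `ι` consisting of `i`'s and `j`'s differ. -/
def AdaptedA (n : ℕ) (ι : ℕ → ℕ) : Prop :=
  ∀ i j : ℕ, 1 ≤ i → i ≤ n → 1 ≤ j → j ≤ n → (i = j + 1 ∨ j = i + 1) →
    ∀ m m' : ℕ, 1 ≤ m → m < m' → (ι m = i ∨ ι m = j) → (ι m' = i ∨ ι m' = j) →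
      (∀ r, m < r → r < m' → ι r ≠ i ∧ ι r ≠ j) → ι m ≠ ι m'

/-- Linear forms on `ℚ^∞`, presented by their coefficients in the re-indexed
coordinates `x_{m,j}`. -/
abbrev LinF : Type := ℤ × ℕ → ℚ

/-- The coordinate functional `x_{m,j}` (zero when `m ≤ 0`, `j = 0` or `j > n`). -/
def XT (n : ℕ) (m : ℤ) (j : ℕ) : LinF :=
  fun q => if q = (m, j) ∧ 1 ≤ m ∧ 1 ≤ j ∧ j ≤ n then 1 else 0

/-- The box `⌈j⌉^A_s = x_{s+P(j),j} − x_{s+P(j−1)+1,j−1}` of type `A_n`. -/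
def boxA (n : ℕ) (ι : ℕ → ℕ) (j : ℕ) (s : ℤ) : LinF :=
  XT n (s + (Pof ι j : ℤ)) j - XT n (s + (Pof ι (j - 1) : ℤ) + 1) (j - 1)

/-- The column tableau `[j₁,…,j_k]^A_s = Σ_{i=1}^k ⌈j_i⌉^A_{s+k−i}` (here `j` is
`0`-indexed: `j ⟨0⟩ = j₁, …`). -/
def tabA (n : ℕ) (ι : ℕ → ℕ) {k : ℕ} (j : Fin k → ℕ) (s : ℤ) : LinF :=
  ∑ i : Fin k, boxA n ι (j i) (s + (k : ℤ) - 1 - ((i : ℕ) : ℤ))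

/-- The Nakashima–Zelevinsky form `β_{m,j}` in re-indexed coordinates, for `ι` adapted
to a type `A` Cartan matrix:
`β_{m,j} = x_{m,j} + x_{m+1,j} − x_{m+p_{j−1,j},j−1} − x_{m+p_{j+1,j},j+1}`. -/
def betaA (n : ℕ) (ι : ℕ → ℕ) (m : ℤ) (j : ℕ) : LinF :=
  XT n m j + XT n (m + 1) j - XT n (m + (pOf ι (j - 1) j : ℤ)) (j - 1)
    - XT n (m + (pOf ι (j + 1) j : ℤ)) (j + 1)

/-- Affine-linear forms: a constant term together with a linear form. -/
abbrev AffF : Type := ℚ × LinF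

/-- The form `β⁽⁻⁾_{m,j}` in re-indexed coordinates: `β_{m−1,j}` when `m ≥ 2`, and the
`λ`-dependent form with constant term `−⟨h_j, λ⟩` when `m = 1`. -/
def betaMA (n : ℕ) (ι : ℕ → ℕ) (lam : ℕ → ℤ) (m : ℤ) (j : ℕ) : AffF :=
  ((if m = 1 then -(lam j : ℚ) else 0), betaA n ι (m - 1) j)

/-- The operator `Ŝ_{m,j}` of the polyhedral realization of `B(λ)` in re-indexed
coordinates. -/
def ShatA (n : ℕ) (ι : ℕ → ℕ) (lam : ℕ → ℤ) (m : ℤ) (j : ℕ) (φ : AffF) : AffF :=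
  if 0 < φ.2 (m, j) then φ - φ.2 (m, j) • (((0 : ℚ), betaA n ι m j) : AffF)
  else φ - φ.2 (m, j) • betaMA n ι lam m j

end


section Aux

lemma pOf_le_one' (ι : ℕ → ℕ) (i j : ℕ) : pOf ι i j ≤ 1 := by
  unfold pOf; split <;> simp

lemma Pof_mono' (ι : ℕ → ℕ) : Monotone (Pof ι) := fun a b hab =>
  Finset.sum_le_sum_of_subset (Finset.Icc_subset_Icc_right hab)

lemma Pof_succ' (ι : ℕ → ℕ) {k : ℕ} (hk : 1 ≤ k) :
    Pof ι (k + 1) = Pof ι k + pOf ι (k + 1) k := by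
  unfold Pof
  rw [Finset.sum_Icc_succ_top (by omega : 2 ≤ k + 1)]
  simp

lemma Pof_le_add' (ι : ℕ → ℕ) {l r : ℕ} (h : l ≤ r) :
    Pof ι r ≤ Pof ι l + (r - l) := by
  induction r with
  | zero =>
    have : l = 0 := by omega
    simp [this]
  | succ r ih =>
    rcases Nat.eq_or_lt_of_le h with hrfl | hlt
    · simp [hrfl]
    · rcases Nat.lt_or_ge r 1 with h0 | h1
      · have hr0 : r = 0 := by omega
        have hl0 : l = 0 := by omega
        subst hr0; subst hl0
        simp [Pof]
      · have hih := ih (by omega)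
        have hs := Pof_succ' ι h1
        have hp := pOf_le_one' ι (r + 1) r
        omega

lemma pOf_eq_one_of' (ι : ℕ → ℕ) {i j : ℕ}
    (hi : ∃ m, 1 ≤ m ∧ ι m = i) (h : firstOcc ι i < firstOcc ι j) :
    pOf ι i j = 1 := by
  obtain ⟨m, hm1, hm2⟩ := hi
  have hSi : ({m | 1 ≤ m ∧ ι m = i} : Set ℕ).Nonempty := ⟨m, hm1, hm2⟩
  have hfi : firstOcc ι i ∈ {m | 1 ≤ m ∧ ι m = i} := Nat.sInf_mem hSi
  have hS : ({m | 1 ≤ m ∧ (ι m = i ∨ ι m = j)} : Set ℕ).Nonempty :=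
    ⟨m, hm1, Or.inl hm2⟩
  have hfb : firstBoth ι i j ∈ {m | 1 ≤ m ∧ (ι m = i ∨ ι m = j)} := Nat.sInf_mem hS
  have hle : firstBoth ι i j ≤ firstOcc ι i :=
    Nat.sInf_le ⟨hfi.1, Or.inl hfi.2⟩
  rcases hfb.2 with hb | hb
  · simp [pOf, hb]
  · exfalso
    have : firstOcc ι j ≤ firstBoth ι i j := Nat.sInf_le ⟨hfb.1, hb⟩
    omega

lemma pOf_eq_zero_of' (ι : ℕ → ℕ) {i j : ℕ} (hij : i ≠ j)
    (hj : ∃ m, 1 ≤ m ∧ ι m = j) (h : firstOcc ι j < firstOcc ι i) :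
    pOf ι i j = 0 := by
  obtain ⟨m, hm1, hm2⟩ := hj
  have hSj : ({m | 1 ≤ m ∧ ι m = j} : Set ℕ).Nonempty := ⟨m, hm1, hm2⟩
  have hfj : firstOcc ι j ∈ {m | 1 ≤ m ∧ ι m = j} := Nat.sInf_mem hSj
  have hS : ({m | 1 ≤ m ∧ (ι m = i ∨ ι m = j)} : Set ℕ).Nonempty :=
    ⟨m, hm1, Or.inr hm2⟩
  have hfb : firstBoth ι i j ∈ {m | 1 ≤ m ∧ (ι m = i ∨ ι m = j)} := Nat.sInf_mem hS
  have hle : firstBoth ι i j ≤ firstOcc ι j :=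
    Nat.sInf_le ⟨hfj.1, Or.inr hfj.2⟩
  rcases hfb.2 with hb | hb
  · exfalso
    have : firstOcc ι i ≤ firstBoth ι i j := Nat.sInf_le ⟨hfb.1, hb⟩
    omega
  · simp only [pOf, hb]
    rw [if_neg (fun hh => hij hh.symm)]

lemma XT_nonneg' (n : ℕ) (m : ℤ) (j : ℕ) (q : ℤ × ℕ) : 0 ≤ XT n m j q := by
  unfold XT; split <;> norm_num

lemma XT_le_one' (n : ℕ) (m : ℤ) (j : ℕ) (q : ℤ × ℕ) : XT n m j q ≤ 1 := by
  unfold XT; split <;> norm_num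

lemma XT_eq_zero_of_ne' (n : ℕ) (m : ℤ) (j jj : ℕ) (h : j ≠ jj) :
    XT n m j (1, jj) = 0 := by
  unfold XT
  rw [if_neg]
  rintro ⟨heq, -⟩
  rw [Prod.mk.injEq] at heq
  exact h heq.2.symm

lemma XT_eq_zero_of_m' (n : ℕ) (m : ℤ) (j jj : ℕ) (h : m ≠ 1) :
    XT n m j (1, jj) = 0 := by
  unfold XT
  rw [if_neg]
  rintro ⟨heq, -⟩
  rw [Prod.mk.injEq] at heq
  exact h heq.1.symm

lemma XT_eq_one' (n : ℕ) (jj : ℕ) (h1 : 1 ≤ jj) (h2 : jj ≤ n) :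
    XT n 1 jj (1, jj) = 1 := by
  unfold XT
  rw [if_pos ⟨rfl, by norm_num, h1, h2⟩]

lemma boxA_ge_neg_one (n : ℕ) (ι : ℕ → ℕ) (J : ℕ) (s : ℤ) (q : ℤ × ℕ) :
    -1 ≤ boxA n ι J s q := by
  simp only [boxA, Pi.sub_apply]
  have h1 := XT_nonneg' n (s + (Pof ι J : ℤ)) J q
  have h2 := XT_le_one' n (s + (Pof ι (J - 1) : ℤ) + 1) (J - 1) q
  linarith

lemma boxA_nonneg_of_ne (n : ℕ) (ι : ℕ → ℕ) {J jj : ℕ} (s : ℤ) (h : J - 1 ≠ jj) :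
    0 ≤ boxA n ι J s (1, jj) := by
  simp only [boxA, Pi.sub_apply]
  rw [XT_eq_zero_of_ne' _ _ _ _ h]
  have := XT_nonneg' n (s + (Pof ι J : ℤ)) J (1, jj)
  linarith

lemma boxA_nonneg_of_m (n : ℕ) (ι : ℕ → ℕ) {J : ℕ} {s : ℤ} (jj : ℕ)
    (h : s + (Pof ι (J - 1) : ℤ) + 1 ≠ 1) :
    0 ≤ boxA n ι J s (1, jj) := by
  simp only [boxA, Pi.sub_apply]
  rw [XT_eq_zero_of_m' _ _ _ _ h]
  have := XT_nonneg' n (s + (Pof ι J : ℤ)) J (1, jj)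
  linarith

lemma boxA_eq_one (n : ℕ) (ι : ℕ → ℕ) {jj : ℕ} {s : ℤ}
    (h1 : 1 ≤ jj) (h2 : jj ≤ n) (hm : s + (Pof ι jj : ℤ) = 1) :
    boxA n ι jj s (1, jj) = 1 := by
  simp only [boxA, Pi.sub_apply]
  rw [XT_eq_zero_of_ne' _ _ _ _ (show jj - 1 ≠ jj by omega), hm,
    XT_eq_one' n jj h1 h2]
  ring

end Aux

/-- Strict positivity in type `A` (case where both conditions hold): for `ι` adapted,
`1 < k < n` with `ι⁽ᵏ⁾ > ι⁽ᵏ⁺¹⁾` and `ι⁽ᵏ⁾ > ι⁽ᵏ⁻¹⁾`, and a column tableau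
`T = [j₁,…,j_k]^A_{−P(k−1)} + ⟨λ,h_k⟩` with `1 ≤ j₁ < ⋯ < j_k ≤ n+1`, `j_k > k` and
`T ≠ λ⁽ᵏ⁾` (i.e. `(j₁,…,j_k) ≠ (1,…,k−1,k+1)`), every coordinate `x_{1,j}` (the first
occurrence of `j`, i.e. the coordinates `x_l` with `l⁽⁻⁾ = 0`) has nonnegative
coefficient in `T`.  (Columns are `0`-indexed, `a ↦ j_{a+1}`.) -/
theorem tabA_first_coeff_nonneg (n : ℕ) (ι : ℕ → ℕ) (lam : ℕ → ℤ)
    (hseq : SeqCond n ι) (had : AdaptedA n ι)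
    (k : ℕ) (hk1 : 1 < k) (hkn : k < n)
    (h1 : firstOcc ι (k + 1) < firstOcc ι k)
    (h2 : firstOcc ι (k - 1) < firstOcc ι k)
    (j : Fin k → ℕ) (hmono : StrictMono j)
    (hrange : ∀ i, 1 ≤ j i ∧ j i ≤ n + 1)
    (hlast : ∀ i : Fin k, (i : ℕ) = k - 1 → k < j i)
    (hne : j ≠ fun i : Fin k => if (i : ℕ) < k - 1 then (i : ℕ) + 1 else k + 1) :
    ∀ jj : ℕ, 1 ≤ jj → jj ≤ n →
      0 ≤ tabA n ι j (-(Pof ι (k - 1) : ℤ)) (1, jj) := by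
  intro jj hjj1 hjjn
  -- occurrences of k-1, k, k+1
  have hocc : ∀ i, 1 ≤ i → i ≤ n → ∃ m, 1 ≤ m ∧ ι m = i := by
    intro i hi1 hi2
    obtain ⟨m, hm, hm'⟩ := hseq.2.2 i hi1 hi2 0
    exact ⟨m, hm, hm'⟩
  have hP1 : Pof ι (k + 1) = Pof ι (k - 1) + 1 := by
    have e1 : Pof ι (k + 1) = Pof ι k + pOf ι (k + 1) k := Pof_succ' ι (by omega)
    have e2 : Pof ι k = Pof ι (k - 1) + pOf ι k (k - 1) := by
      have := Pof_succ' ι (show 1 ≤ k - 1 by omega)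
      rw [show k - 1 + 1 = k by omega] at this
      exact this
    have e3 : pOf ι (k + 1) k = 1 :=
      pOf_eq_one_of' ι (hocc (k + 1) (by omega) (by omega)) h1
    have e4 : pOf ι k (k - 1) = 0 :=
      pOf_eq_zero_of' ι (by omega) (hocc (k - 1) (by omega) (by omega)) h2
    omega
  -- strict monotonicity consequences
  have claim2 : ∀ m' (hm' : m' < k) m (hm : m < k), m ≤ m' →
      j ⟨m, hm⟩ + (m' - m) ≤ j ⟨m', hm'⟩ := by
    intro m'
    induction m' with
    | zero =>
      intro hm' m hm hle
      have : m = 0 := by omega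
      subst this
      simp
    | succ r ihr =>
      intro hm' m hm hle
      rcases Nat.eq_or_lt_of_le hle with hrfl | hlt
      · subst hrfl; simp
      · have hr : r < k := by omega
        have ha := ihr hr m hm (by omega)
        have hb : j ⟨r, hr⟩ < j ⟨r + 1, hm'⟩ := hmono (by simp [Fin.lt_def])
        omega
  have claim1 : ∀ a : Fin k, (a : ℕ) + 1 ≤ j a := by
    intro a
    have h0 : (0 : ℕ) < k := by omega
    have hc := claim2 (a : ℕ) a.isLt 0 h0 (Nat.zero_le _)
    simp only [Fin.eta] at hc
    have h0' := (hrange ⟨0, h0⟩).1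
    omega
  simp only [tabA, Finset.sum_apply]
  by_cases hB : ∃ a : Fin k, j a = jj + 1 ∧
      ((k : ℤ) - 1 - ((a : ℕ) : ℤ) + (Pof ι jj : ℤ) = (Pof ι (k - 1) : ℤ))
  · obtain ⟨a₁, hja₁, hm1⟩ := hB
    have hAlt : (a₁ : ℕ) < k := a₁.isLt
    have hmN : (k - 1 - (a₁ : ℕ)) + Pof ι jj = Pof ι (k - 1) := by omega
    have hjjA : (a₁ : ℕ) ≤ jj := by
      have := claim1 a₁
      omega
    -- find cancelling positive column
    obtain ⟨a₀, ha₀v, hja₀⟩ :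
        ∃ a₀ : Fin k, (a₀ : ℕ) + 1 = (a₁ : ℕ) ∧ j a₀ = jj := by
      by_cases hAk : (a₁ : ℕ) = k - 1
      · have hjk : k < j a₁ := hlast a₁ hAk
        have hjjk : jj = k := by
          by_contra hne'
          have hk1' : k + 1 ≤ jj := by omega
          have := Pof_mono' ι hk1'
          omega
        have hk2 : k - 2 < k := by omega
        have hlt' : j ⟨k - 2, hk2⟩ < j a₁ := by
          apply hmono
          rw [Fin.lt_def]
          show k - 2 < (a₁ : ℕ)
          omega
        have hge' : k - 2 + 1 ≤ j ⟨k - 2, hk2⟩ := claim1 ⟨k - 2, hk2⟩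
        by_cases hc : j ⟨k - 2, hk2⟩ = jj
        · exact ⟨⟨k - 2, hk2⟩, by show k - 2 + 1 = (a₁ : ℕ); omega, hc⟩
        · exfalso
          apply hne
          funext a
          by_cases ha : (a : ℕ) < k - 1
          · have hc1 := claim1 a
            have hc2 := claim2 (k - 2) hk2 (a : ℕ) a.isLt (by omega)
            simp only [Fin.eta] at hc2
            simp only [ha, if_pos]
            omega
          · have haA : a = a₁ := Fin.ext (by omega)
            simp only [ha, if_neg, if_false]
            rw [haA, hja₁, hjjk]
      · by_cases hjk : k - 1 ≤ jj
        · exfalso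
          have := Pof_mono' ι hjk
          omega
        · have hub := Pof_le_add' ι (show jj ≤ k - 1 by omega)
          have hjjA' : jj = (a₁ : ℕ) := by omega
          have hA1 : 1 ≤ (a₁ : ℕ) := by omega
          have hlt2 : (a₁ : ℕ) - 1 < k := by omega
          refine ⟨⟨(a₁ : ℕ) - 1, hlt2⟩, by show (a₁ : ℕ) - 1 + 1 = (a₁ : ℕ); omega, ?_⟩
          have hc1 : (a₁ : ℕ) - 1 + 1 ≤ j ⟨(a₁ : ℕ) - 1, hlt2⟩ := claim1 ⟨(a₁ : ℕ) - 1, hlt2⟩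
          have hc2 : j ⟨(a₁ : ℕ) - 1, hlt2⟩ < j a₁ := by
            apply hmono
            rw [Fin.lt_def]
            show (a₁ : ℕ) - 1 < (a₁ : ℕ)
            omega
          omega
    have hne01 : a₀ ≠ a₁ := by
      intro h
      rw [h] at ha₀v
      omega
    rw [← Finset.add_sum_erase _ _ (Finset.mem_univ a₀),
      ← Finset.add_sum_erase _ _
        (Finset.mem_erase.mpr ⟨hne01.symm, Finset.mem_univ a₁⟩)]
    have hF0 : boxA n ι (j a₀)
        (-(Pof ι (k - 1) : ℤ) + (k : ℤ) - 1 - ((a₀ : ℕ) : ℤ)) (1, jj) = 1 := by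
      rw [hja₀]
      exact boxA_eq_one n ι hjj1 hjjn (by omega)
    have hF1 := boxA_ge_neg_one n ι (j a₁)
      (-(Pof ι (k - 1) : ℤ) + (k : ℤ) - 1 - ((a₁ : ℕ) : ℤ)) (1, jj)
    have hrest : (0 : ℚ) ≤ ∑ a ∈ (Finset.univ.erase a₀).erase a₁,
        boxA n ι (j a) (-(Pof ι (k - 1) : ℤ) + (k : ℤ) - 1 - ((a : ℕ) : ℤ)) (1, jj) := by
      apply Finset.sum_nonneg
      intro a ha
      have haa : a ≠ a₁ := (Finset.mem_erase.mp ha).1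
      have hja : j a ≠ jj + 1 := fun h => haa (hmono.injective (h.trans hja₁.symm))
      apply boxA_nonneg_of_ne
      have := (hrange a).1
      omega
    rw [hF0]
    linarith
  · apply Finset.sum_nonneg
    intro a _
    by_cases hja : j a = jj + 1
    · apply boxA_nonneg_of_m
      intro hmz
      apply hB
      refine ⟨a, hja, ?_⟩
      rw [hja] at hmz
      simp only [Nat.add_sub_cancel] at hmz
      omega
    · apply boxA_nonneg_of_ne
      have := (hrange a).1
      omega
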